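/- If a metric space (X,d) is uniformly locally trace equi-connected at a subset X₀ ⊂ X, then X is uniformly locally chain equi-connected at X₀. -/
import Mathlib


/-- A continuity modulus: a nondecreasing `ω : (0,∞) → (0,∞)` with `ω(t) → 0` as `t → 0⁺`. -/
def ContinuityModulus (ω : ℝ → ℝ) : Prop :=
  MonotoneOn ω (Set.Ioi 0) ∧ (∀ t : ℝ, 0 < t → 0 < ω t) ∧
    Filter.Tendsto ω (nhdsWithin 0 (Set.Ioi 0)) (nhds 0)

/-- `c` is an `η`-chain of length `l` linking `x` and `y`. -/
def IsEtaChain {X : Type*} [MetricSpace X] (η : ℝ) (l : ℕ)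
    (c : Fin (l + 1) → X) (x y : X) : Prop :=
  c 0 = x ∧ c (Fin.last l) = y ∧ ∀ i : Fin l, dist (c i.castSucc) (c i.succ) < η

/-- `X` is uniformly locally chain equi-connected at `X₀`. -/
def ULChainEquiConnectedAt {X : Type*} [MetricSpace X] (X₀ : Set X) : Prop :=
  ∀ ε : ℝ, 0 < ε → ∃ δ : ℝ, 0 < δ ∧ ∀ η : ℝ, 0 < η → ∃ l : ℕ,
    ∀ x ∈ X₀, ∀ y ∈ X₀, dist x y < δ →
      ∃ l' : ℕ, l' ≤ l ∧ ∃ c : Fin (l' + 1) → X, IsEtaChain η l' c x y ∧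
        ∀ i j : Fin (l' + 1), dist (c i) (c j) < ε

/-- `f` restricted to `Q` has continuity modulus at most `ω`. -/
def ModulusLE {X : Type*} [MetricSpace X] (ω : ℝ → ℝ) (Q : Set ℝ) (f : ℝ → X) : Prop :=
  ∀ q ∈ Q, ∀ q' ∈ Q, ∀ t : ℝ, 0 < t → |q - q'| ≤ t → dist (f q) (f q') ≤ ω t

/-- `X` is uniformly locally trace equi-connected at `X₀`. -/
def ULTraceEquiConnectedAt {X : Type*} [MetricSpace X] (X₀ : Set X) : Prop :=
  ∃ ε₀ : ℝ, 0 < ε₀ ∧ ∃ ω : ℝ → ℝ, ContinuityModulus ω ∧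
    ∀ x ∈ X₀, ∀ y ∈ X₀, dist x y < ε₀ →
      ∀ Q : Set ℝ, Q.Countable → Q ⊆ Set.Icc 0 (dist x y) →
        Set.Icc 0 (dist x y) ⊆ closure Q → 0 ∈ Q → dist x y ∈ Q →
        ∃ f : ℝ → X, f 0 = x ∧ f (dist x y) = y ∧ ModulusLE ω Q f

/-- Uniform local trace equi-connectedness at `X₀` implies uniform local chain
equi-connectedness at `X₀`. -/
theorem ultec_implies_ulcec {X : Type*} [MetricSpace X] (X₀ : Set X)
    (h : ULTraceEquiConnectedAt X₀) : ULChainEquiConnectedAt X₀ := by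
  obtain ⟨ε₀, hε₀, ω, ⟨hmono, hωpos, htend⟩, htrace⟩ := h
  intro ε hε
  have h1 := htend.eventually_lt_const hε
  rw [Filter.eventually_iff, mem_nhdsWithin] at h1
  obtain ⟨U, hU, hU0, hUsub⟩ := h1
  obtain ⟨a, ha, haU⟩ := Metric.isOpen_iff.mp hU 0 hU0
  set δ : ℝ := min (a/2) (ε₀/2) with hδdef
  have hδpos : 0 < δ := lt_min (by linarith) (by linarith)
  have hδa : δ < a := lt_of_le_of_lt (min_le_left _ _) (by linarith)
  have hδε₀ : δ < ε₀ := lt_of_le_of_lt (min_le_right _ _) (by linarith)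
  have hωδ : ω δ < ε := by
    apply hUsub
    constructor
    · apply haU; rw [Metric.mem_ball, Real.dist_eq, sub_zero, abs_of_pos hδpos]; exact hδa
    · exact hδpos
  refine ⟨δ, hδpos, ?_⟩
  intro η hη
  have h2 := htend.eventually_lt_const hη
  rw [Filter.eventually_iff, mem_nhdsWithin] at h2
  obtain ⟨V, hV, hV0, hVsub⟩ := h2
  obtain ⟨a', ha', haV⟩ := Metric.isOpen_iff.mp hV 0 hV0
  set s : ℝ := a'/2 with hsdef
  have hspos : 0 < s := by positivity
  have hωs : ω s < η := by
    apply hVsub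
    constructor
    · apply haV; rw [Metric.mem_ball, Real.dist_eq, sub_zero, abs_of_pos hspos]; linarith
    · exact hspos
  set N : ℕ := ⌈2*δ/s⌉₊ + 1 with hNdef
  have hNpos : 0 < (N:ℝ) := by positivity
  have hN : 2*δ/s < (N:ℝ) := by
    calc 2*δ/s ≤ (⌈2*δ/s⌉₊ : ℝ) := Nat.le_ceil _
    _ < (N:ℝ) := by rw [hNdef]; push_cast; linarith
  have hδN : δ/(N:ℝ) < s/2 := by
    rw [div_lt_iff₀ hNpos]
    rw [div_lt_iff₀ hspos] at hN
    linarith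
  clear_value N s δ
  refine ⟨N, ?_⟩
  intro x hx y hy hxy
  set d : ℝ := dist x y with hddef
  have hd0 : 0 ≤ d := dist_nonneg
  set Q : Set ℝ := insert d (Set.Icc 0 d ∩ Set.range ((↑) : ℚ → ℝ)) with hQdef
  have hQc : Q.Countable :=
    ((Set.countable_range _).mono Set.inter_subset_right).insert d
  have hQsub : Q ⊆ Set.Icc 0 d := by
    rw [hQdef, Set.insert_subset_iff]
    exact ⟨⟨hd0, le_refl d⟩, Set.inter_subset_left⟩
  have h0Q : (0:ℝ) ∈ Q := Or.inr ⟨⟨le_refl 0, hd0⟩, ⟨0, Rat.cast_zero⟩⟩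
  have hdQ : d ∈ Q := Set.mem_insert d _
  have hdense : Set.Icc 0 d ⊆ closure Q := by
    intro p hp
    rw [Metric.mem_closure_iff]
    intro r hr
    rcases eq_or_lt_of_le hp.2 with hpd | hpd
    · exact ⟨d, hdQ, by rw [hpd]; simp [hr]⟩
    · obtain ⟨qr, hq1, hq2⟩ := exists_rat_btwn (lt_min hpd (lt_add_of_pos_right p hr))
      refine ⟨(qr:ℝ), Or.inr ⟨⟨le_trans hp.1 (le_of_lt hq1), le_of_lt (lt_of_lt_of_le hq2 (min_le_left _ _))⟩, ⟨qr, rfl⟩⟩, ?_⟩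
      rw [Real.dist_eq, abs_of_nonpos (by linarith)]
      have := lt_of_lt_of_le hq2 (min_le_right _ _)
      linarith
  obtain ⟨f, hf0, hfd, hfmod⟩ :=
    htrace x hx y hy (lt_trans hxy hδε₀) Q hQc hQsub hdense h0Q hdQ
  have hdδ : d < δ := hxy
  have hpt : ∀ i : Fin (N+1), ∃ t, t ∈ Q ∧ |t - (i:ℕ) * d / (N:ℝ)| < s/4 ∧
      ((i:ℕ) = 0 → t = 0) ∧ ((i:ℕ) = N → t = d) := by
    intro i
    by_cases hi0 : (i:ℕ) = 0
    · refine ⟨0, h0Q, ?_, fun _ => rfl, ?_⟩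
      · rw [hi0]
        simp only [Nat.cast_zero, zero_mul, zero_div, sub_zero, abs_zero, abs_neg]
        positivity
      · intro hiN; omega
    · by_cases hiN : (i:ℕ) = N
      · refine ⟨d, hdQ, ?_, fun h' => absurd h' hi0, fun _ => rfl⟩
        rw [hiN]
        have : (N:ℝ) * d / (N:ℝ) = d := by field_simp
        rw [this, sub_self, abs_zero]; positivity
      · have hpmem : (i:ℕ) * d / (N:ℝ) ∈ Set.Icc 0 d := by
          constructor
          · positivity
          · rw [div_le_iff₀ hNpos]
            have hiLe : ((i:ℕ):ℝ) ≤ (N:ℝ) := by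
              exact_mod_cast Nat.le_of_lt_succ i.isLt
            nlinarith
        obtain ⟨b, hbQ, hbd⟩ := Metric.mem_closure_iff.mp (hdense hpmem) (s/4) (by positivity)
        refine ⟨b, hbQ, ?_, fun h' => absurd h' hi0, fun h' => absurd h' hiN⟩
        rw [Real.dist_eq] at hbd
        rw [abs_sub_comm]
        exact hbd
  choose q hqQ hqnear hq0 hqN using hpt
  refine ⟨N, le_refl N, fun i => f (q i), ⟨?_, ?_, ?_⟩, ?_⟩
  · show f (q 0) = x
    rw [hq0 0 rfl, hf0]
  · show f (q (Fin.last N)) = y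
    rw [hqN (Fin.last N) rfl]
    rw [← hddef] at hfd
    exact hfd
  · intro i
    have hA := hqnear i.castSucc
    have hB := hqnear i.succ
    rw [Fin.coe_castSucc] at hA
    rw [Fin.val_succ] at hB
    have hdiff : |q i.castSucc - q i.succ| ≤ s := by
      set P : ℝ := ((i:ℕ):ℝ) * d / (N:ℝ) with hP
      set P' : ℝ := (((i:ℕ):ℝ)+1) * d / (N:ℝ) with hP'
      have hdN : d / (N:ℝ) < s/2 :=
        lt_of_le_of_lt (by gcongr) hδN
      have h1 : |q i.castSucc - P| < s/4 := hA
      have h2 : |q i.succ - P'| < s/4 := by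
        rw [hP']
        push_cast at hB
        exact hB
      have h3 : |P - P'| = d / (N:ℝ) := by
        have : P - P' = -(d / (N:ℝ)) := by rw [hP, hP']; ring
        rw [this, abs_neg, abs_of_nonneg (by positivity)]
      have hsplit : q i.castSucc - q i.succ = (q i.castSucc - P) + (P - P') + (P' - q i.succ) := by
        ring
      calc |q i.castSucc - q i.succ|
          ≤ |q i.castSucc - P| + |P - P'| + |P' - q i.succ| := by
            rw [hsplit]; exact le_trans (abs_add_le _ _) (by gcongr; exact abs_add_le _ _)
        _ ≤ s := by rw [h3, abs_sub_comm P']; linarith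
    calc dist (f (q i.castSucc)) (f (q i.succ))
        ≤ ω s := hfmod _ (hqQ _) _ (hqQ _) s hspos hdiff
      _ < η := hωs
  · intro i j
    have hi := hQsub (hqQ i)
    have hj := hQsub (hqQ j)
    have : |q i - q j| ≤ δ := by
      rw [abs_le]
      constructor <;> [linarith [hi.1, hj.2]; linarith [hi.2, hj.1]]
    calc dist (f (q i)) (f (q j)) ≤ ω δ := hfmod _ (hqQ _) _ (hqQ _) δ hδpos this
      _ < ε := hωδ
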